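/- Let L > 0, Δ > 0 with LΔ ≤ 2, and let M = 1/Δ be an even positive integer. Define f₁(x) = 1 + Lx for 0 ≤ x ≤ Δ/2 and f₁(x) = 1 + L(Δ − x) for Δ/2 ≤ x ≤ Δ; define f₋₁(x) = 1 − Lx for 0 ≤ x ≤ Δ/2 and f₋₁(x) = 1 − L(Δ − x) for Δ/2 ≤ x ≤ Δ. For z = (z₀,…,z_{M/2−1}) ∈ {−1,+1}^{M/2}, define f_q : [0,1] → ℝ piecewise by f_q(x) = f_{z_i}(x − 2iΔ) for x ∈ [2iΔ, (2i+1)Δ] and f_q(x) = f_{−z_i}(x − (2i+1)Δ) for x ∈ [(2i+1)Δ, 2(i+1)Δ], for i = 0,…,M/2−1. Then for every z, f_q is nonnegative, L-Lipschitz on [0,1], and ∫₀¹ f_q(x) dx = 1, i.e., f_q is a probability density in 𝒫([0,1]; L). -/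

import Mathlib

open MeasureTheory intervalIntegral

/-- The tent perturbation on `[0, Δ]` with sign `s`:
`f_s(x) = 1 + sLx` for `0 ≤ x ≤ Δ/2` and `f_s(x) = 1 + sL(Δ − x)` for `Δ/2 ≤ x ≤ Δ`
(`s = 1` gives `f₁`, `s = −1` gives `f₋₁`). -/
noncomputable def ftent (L Δ s x : ℝ) : ℝ :=
  if x ≤ Δ / 2 then 1 + s * L * x else 1 + s * L * (Δ - x)

/-- The density `f_q` corresponding to the sign pattern `z`: on `[2iΔ, (2i+1)Δ]` it equals
`f_{z_i}(x − 2iΔ)`, and on `[(2i+1)Δ, 2(i+1)Δ]` it equals `f_{−z_i}(x − (2i+1)Δ)`. -/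
noncomputable def fq (L Δ : ℝ) (z : ℕ → ℝ) (x : ℝ) : ℝ :=
  let j : ℕ := ⌊x / Δ⌋₊
  if j % 2 = 0 then ftent L Δ (z (j / 2)) (x - 2 * (j / 2 : ℕ) * Δ)
  else ftent L Δ (-(z (j / 2))) (x - (2 * (j / 2 : ℕ) + 1) * Δ)

/-- The sign of the tent used on block `j`. -/
noncomputable def fqsgn (z : ℕ → ℝ) (j : ℕ) : ℝ :=
  if j % 2 = 0 then z (j / 2) else -(z (j / 2))

lemma ftent_eq_min (L Δ s x : ℝ) : ftent L Δ s x = 1 + s * L * min x (Δ - x) := by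
  unfold ftent
  rcases le_or_gt x (Δ / 2) with h | h
  · rw [if_pos h, min_eq_left (by linarith)]
  · rw [if_neg (not_le.2 h), min_eq_right (by linarith)]

lemma fq_eq_min (L Δ : ℝ) (z : ℕ → ℝ) (x : ℝ) :
    fq L Δ z x = 1 + fqsgn z ⌊x / Δ⌋₊ * L *
      min (x - (⌊x / Δ⌋₊ : ℝ) * Δ) (((⌊x / Δ⌋₊ : ℝ) + 1) * Δ - x) := by
  unfold fq fqsgn
  set j := ⌊x / Δ⌋₊ with hj
  simp only
  rcases Nat.even_or_odd j with he | ho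
  · have h0 : j % 2 = 0 := Nat.even_iff.mp he
    have hr : (j : ℝ) = 2 * ((j / 2 : ℕ) : ℝ) := by
      have : 2 * (j / 2) = j := by omega
      exact_mod_cast (congrArg (Nat.cast (R := ℝ)) this).symm
    rw [if_pos h0, if_pos h0, ftent_eq_min]
    have e1 : x - (j : ℝ) * Δ = x - 2 * ((j / 2 : ℕ) : ℝ) * Δ := by rw [hr]
    have e2 : ((j : ℝ) + 1) * Δ - x = Δ - (x - 2 * ((j / 2 : ℕ) : ℝ) * Δ) := by
      rw [hr]; ring
    rw [e1, e2]
  · have h0' : 2 * (j / 2) + 1 = j := by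
      have := Nat.odd_iff.mp ho; omega
    have h0 : ¬ (j % 2 = 0) := by omega
    have hr : (j : ℝ) = 2 * ((j / 2 : ℕ) : ℝ) + 1 := by
      exact_mod_cast (congrArg (Nat.cast (R := ℝ)) h0').symm
    rw [if_neg h0, if_neg h0, ftent_eq_min]
    have e1 : x - (j : ℝ) * Δ = x - (2 * ((j / 2 : ℕ) : ℝ) + 1) * Δ := by rw [hr]
    have e2 : ((j : ℝ) + 1) * Δ - x = Δ - (x - (2 * ((j / 2 : ℕ) : ℝ) + 1) * Δ) := by
      rw [hr]; ring
    rw [e1, e2]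

lemma fq_on_block (L Δ : ℝ) (z : ℕ → ℝ) (hΔ : 0 < Δ) (k : ℕ) (x : ℝ)
    (hx : x ∈ Set.Icc ((k : ℝ) * Δ) (((k : ℝ) + 1) * Δ)) :
    fq L Δ z x = 1 + fqsgn z k * L * min (x - (k : ℝ) * Δ) (((k : ℝ) + 1) * Δ - x) := by
  obtain ⟨hx1, hx2⟩ := hx
  rcases lt_or_eq_of_le hx2 with h | h
  · have hj : ⌊x / Δ⌋₊ = k := by
      rw [Nat.floor_eq_iff]
      constructor
      · rw [le_div_iff₀ hΔ]; exact hx1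
      · rw [div_lt_iff₀ hΔ]; push_cast; exact h
      · exact div_nonneg (le_trans (by positivity) hx1) hΔ.le
    rw [fq_eq_min, hj]
  · have hj : ⌊x / Δ⌋₊ = k + 1 := by
      rw [h, mul_div_assoc, div_self hΔ.ne', mul_one]
      exact_mod_cast Nat.floor_natCast (k + 1)
    rw [fq_eq_min, hj, h]
    push_cast
    rw [show ((k : ℝ) + 1) * Δ - ((k:ℝ) + 1) * Δ = 0 by ring]
    rw [min_eq_left (by nlinarith), min_eq_right (by nlinarith)]
    ring

lemma integral_linear (c e p q : ℝ) :
    ∫ x in p..q, (e + c * x) = e * (q - p) + c * (q ^ 2 - p ^ 2) / 2 := by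
  rw [intervalIntegral.integral_add intervalIntegrable_const
    ((by fun_prop : Continuous fun x : ℝ => c * x).intervalIntegrable p q),
    intervalIntegral.integral_const, intervalIntegral.integral_const_mul, integral_id]
  simp [smul_eq_mul]
  ring

lemma integral_tent (a Δ c : ℝ) (hΔ : 0 < Δ) :
    ∫ x in a..(a + Δ), (1 + c * min (x - a) (a + Δ - x)) = Δ + c * Δ ^ 2 / 4 := by
  have hm1 : a ≤ a + Δ / 2 := by linarith
  have hm2 : a + Δ / 2 ≤ a + Δ := by linarith
  have hcont : Continuous fun x : ℝ => 1 + c * min (x - a) (a + Δ - x) := by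
    fun_prop
  have hsplit := intervalIntegral.integral_add_adjacent_intervals (μ := volume)
    (hcont.intervalIntegrable a (a + Δ / 2)) (hcont.intervalIntegrable (a + Δ / 2) (a + Δ))
  rw [← hsplit]
  have h1 : (∫ x in a..(a + Δ / 2), (1 + c * min (x - a) (a + Δ - x)))
      = ∫ x in a..(a + Δ / 2), (1 - c * a + c * x) := by
    apply intervalIntegral.integral_congr
    intro x hx
    rw [Set.uIcc_of_le hm1] at hx
    obtain ⟨h1, h2⟩ := hx
    show 1 + c * min (x - a) (a + Δ - x) = 1 - c * a + c * x
    rw [min_eq_left (by linarith)]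
    ring
  have h2 : (∫ x in (a + Δ / 2)..(a + Δ), (1 + c * min (x - a) (a + Δ - x)))
      = ∫ x in (a + Δ / 2)..(a + Δ), (1 + c * (a + Δ) + -c * x) := by
    apply intervalIntegral.integral_congr
    intro x hx
    rw [Set.uIcc_of_le hm2] at hx
    obtain ⟨h1, h2⟩ := hx
    show 1 + c * min (x - a) (a + Δ - x) = 1 + c * (a + Δ) + -c * x
    rw [min_eq_right (by linarith)]
    ring
  rw [h1, h2, integral_linear, integral_linear]
  ring

lemma sum_fqsgn (z : ℕ → ℝ) (n : ℕ) :
    ∑ k ∈ Finset.range (2 * n), fqsgn z k = 0 := by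
  induction n with
  | zero => simp
  | succ n ih =>
    rw [show 2 * (n + 1) = 2 * n + 1 + 1 by ring, Finset.sum_range_succ,
      Finset.sum_range_succ, ih]
    have e1 : fqsgn z (2 * n) = z n := by
      unfold fqsgn
      rw [if_pos (by omega), Nat.mul_div_cancel_left n (by norm_num)]
    have e2 : fqsgn z (2 * n + 1) = -(z n) := by
      unfold fqsgn
      rw [if_neg (by omega), show (2 * n + 1) / 2 = n by omega]
    rw [e1, e2]; ring

set_option maxHeartbeats 2000000 in
/-- for `L > 0`, `Δ > 0` with `LΔ ≤ 2`, `M = 1/Δ` an even positive integer,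
and any sign pattern `z ∈ {−1,+1}^{M/2}`, the function `f_q` is nonnegative on `[0,1]`,
`L`-Lipschitz on `[0,1]`, and integrates to `1`, i.e. it is a density in `𝒫([0,1]; L)`. -/
theorem fq_is_lipschitz_density (L Δ : ℝ) (M : ℕ) (z : ℕ → ℝ)
    (hL : 0 < L) (hΔ : 0 < Δ) (hLΔ : L * Δ ≤ 2)
    (hM : Even M) (hMpos : 0 < M) (hMΔ : (M : ℝ) = 1 / Δ)
    (hz : ∀ i < M / 2, z i = 1 ∨ z i = -1) :
    (∀ x ∈ Set.Icc (0 : ℝ) 1, 0 ≤ fq L Δ z x) ∧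
      (∀ x ∈ Set.Icc (0 : ℝ) 1, ∀ y ∈ Set.Icc (0 : ℝ) 1,
        |fq L Δ z x - fq L Δ z y| ≤ L * |x - y|) ∧
      (∫ x in (0 : ℝ)..1, fq L Δ z x) = 1 := by
  have hME : M % 2 = 0 := Nat.even_iff.mp hM
  have hMΔ1 : (M : ℝ) * Δ = 1 := by rw [hMΔ]; field_simp
  -- |sign| ≤ 1 on blocks j < M
  have habs : ∀ j < M, |fqsgn z j| ≤ 1 := by
    intro j hj
    have hj2 : j / 2 < M / 2 := by omega
    rcases hz _ hj2 with h | h <;> unfold fqsgn <;> split_ifs <;> simp [h]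
  -- floor facts
  have hfloor : ∀ x : ℝ, 0 ≤ x →
      (⌊x / Δ⌋₊ : ℝ) * Δ ≤ x ∧ x < ((⌊x / Δ⌋₊ : ℝ) + 1) * Δ := by
    intro x hx
    have h0 : (0:ℝ) ≤ x / Δ := by positivity
    constructor
    · rw [← le_div_iff₀ hΔ]; exact Nat.floor_le h0
    · rw [← div_lt_iff₀ hΔ]; exact Nat.lt_floor_add_one _
  have hfloorM : ∀ x : ℝ, 0 ≤ x → x ≤ 1 → ⌊x / Δ⌋₊ ≤ M := by
    intro x hx0 hx1
    have : x / Δ ≤ (M : ℝ) := by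
      rw [div_le_iff₀ hΔ, hMΔ1]; exact hx1
    calc ⌊x / Δ⌋₊ ≤ ⌊(M : ℝ)⌋₊ := Nat.floor_mono this
      _ = M := Nat.floor_natCast M
  -- central pointwise bound: |fq x - 1| ≤ L * m x, with m x ≥ 0
  have hkey : ∀ x : ℝ, 0 ≤ x → x ≤ 1 →
      |fq L Δ z x - 1| ≤ L * min (x - (⌊x / Δ⌋₊ : ℝ) * Δ) (((⌊x / Δ⌋₊ : ℝ) + 1) * Δ - x) := by
    intro x hx0 hx1
    set j := ⌊x / Δ⌋₊ with hjdef
    obtain ⟨hb1, hb2⟩ := hfloor x hx0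
    have hm0 : 0 ≤ min (x - (j : ℝ) * Δ) (((j : ℝ) + 1) * Δ - x) :=
      le_min (by linarith) (by linarith)
    rw [fq_eq_min]
    rw [show 1 + fqsgn z j * L * min (x - (j:ℝ) * Δ) (((j:ℝ) + 1) * Δ - x) - 1
        = fqsgn z j * (L * min (x - (j:ℝ) * Δ) (((j:ℝ) + 1) * Δ - x)) by ring]
    rw [abs_mul, abs_of_nonneg (mul_nonneg hL.le hm0)]
    rcases lt_or_ge j M with hjM | hjM
    · exact mul_le_of_le_one_left (mul_nonneg hL.le hm0) (habs j hjM)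
    · -- j = M forces x = 1 and m x = 0
      have hx1' : (1:ℝ) ≤ x := by
        have : (M : ℝ) * Δ ≤ (j : ℝ) * Δ := by
          have : (M : ℝ) ≤ (j : ℝ) := by exact_mod_cast hjM
          nlinarith
        linarith [hb1, hMΔ1]
      have hxe : x = 1 := le_antisymm hx1 hx1'
      have hjMe : j = M := le_antisymm (hfloorM x hx0 hx1) hjM
      have : min (x - (j : ℝ) * Δ) (((j : ℝ) + 1) * Δ - x) = 0 := by
        rw [hxe, hjMe]
        rw [min_eq_left (by nlinarith [hMΔ1])]
        nlinarith [hMΔ1]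
      rw [this]
      simp
  constructor
  · -- nonnegativity
    intro x hx
    obtain ⟨hx0, hx1⟩ := hx
    have := hkey x hx0 hx1
    set j := ⌊x / Δ⌋₊
    obtain ⟨hb1, hb2⟩ := hfloor x hx0
    have hmΔ : min (x - (j : ℝ) * Δ) (((j : ℝ) + 1) * Δ - x) ≤ Δ / 2 := by
      rcases min_le_iff.mpr (Or.inl (le_refl (x - (j:ℝ)*Δ))) with h
      have := min_le_left (x - (j:ℝ)*Δ) (((j:ℝ)+1)*Δ - x)
      have := min_le_right (x - (j:ℝ)*Δ) (((j:ℝ)+1)*Δ - x)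
      cases le_total (x - (j:ℝ)*Δ) (((j:ℝ)+1)*Δ - x) with
      | inl h => rw [min_eq_left h]; nlinarith
      | inr h => rw [min_eq_right h]; nlinarith
    have habs' : |fq L Δ z x - 1| ≤ 1 := by
      calc |fq L Δ z x - 1| ≤ L * min (x - (j:ℝ)*Δ) (((j:ℝ)+1)*Δ - x) := this
        _ ≤ L * (Δ / 2) := by
            apply mul_le_mul_of_nonneg_left hmΔ hL.le
        _ ≤ 1 := by nlinarith
    have := abs_le.mp habs'
    linarith [this.1]
  constructor
  · -- Lipschitz
    have main : ∀ x ∈ Set.Icc (0:ℝ) 1, ∀ y ∈ Set.Icc (0:ℝ) 1, x ≤ y →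
        |fq L Δ z x - fq L Δ z y| ≤ L * |x - y| := by
      intro x hx y hy hxy
      obtain ⟨hx0, hx1⟩ := hx
      obtain ⟨hy0, hy1⟩ := hy
      set jx := ⌊x / Δ⌋₊ with hjx
      set jy := ⌊y / Δ⌋₊ with hjy
      obtain ⟨hbx1, hbx2⟩ := hfloor x hx0
      obtain ⟨hby1, hby2⟩ := hfloor y hy0
      have hjle : jx ≤ jy := Nat.floor_mono (by gcongr)
      rcases eq_or_lt_of_le hjle with heq | hlt
      · -- same block
        rcases lt_or_ge jx M with hjM | hjM
        · rw [fq_eq_min L Δ z x, fq_eq_min L Δ z y, ← hjx, ← hjy, ← heq]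
          rw [show (1 + fqsgn z jx * L * min (x - (jx:ℝ)*Δ) (((jx:ℝ)+1)*Δ - x))
              - (1 + fqsgn z jx * L * min (y - (jx:ℝ)*Δ) (((jx:ℝ)+1)*Δ - y))
              = fqsgn z jx * L * (min (x - (jx:ℝ)*Δ) (((jx:ℝ)+1)*Δ - x)
                - min (y - (jx:ℝ)*Δ) (((jx:ℝ)+1)*Δ - y)) by ring]
          rw [abs_mul, abs_mul]
          have hmin : |min (x - (jx:ℝ)*Δ) (((jx:ℝ)+1)*Δ - x)
              - min (y - (jx:ℝ)*Δ) (((jx:ℝ)+1)*Δ - y)| ≤ |x - y| := by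
            refine (abs_min_sub_min_le_max _ _ _ _).trans ?_
            apply max_le
            · rw [show (x - (jx:ℝ)*Δ) - (y - (jx:ℝ)*Δ) = x - y by ring]
            · rw [show (((jx:ℝ)+1)*Δ - x) - ((((jx:ℝ)+1)*Δ - y)) = -(x - y) by ring, abs_neg]
          have := habs jx hjM
          rw [abs_of_nonneg hL.le]
          calc |fqsgn z jx| * L * |min (x - (jx:ℝ)*Δ) (((jx:ℝ)+1)*Δ - x)
              - min (y - (jx:ℝ)*Δ) (((jx:ℝ)+1)*Δ - y)|
              ≤ 1 * L * |x - y| := by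
                apply mul_le_mul (by nlinarith [abs_nonneg (fqsgn z jx)]) hmin (abs_nonneg _)
                  (by positivity)
            _ = L * |x - y| := by ring
        · -- jx = jy = M : then x = y = 1
          have hjxM : jx = M := le_antisymm (hfloorM x hx0 hx1) hjM
          have hx1' : x = 1 := by
            have h1 : (M : ℝ) * Δ ≤ x := by rw [← hjxM]; exact hbx1
            linarith [hMΔ1 ▸ h1]
          have hjyM : jy = M := heq ▸ hjxM
          have hy1' : y = 1 := by
            have h1 : (M : ℝ) * Δ ≤ y := by rw [← hjyM]; exact hby1
            linarith [hMΔ1 ▸ h1]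
          rw [hx1', hy1']
          simp
      · -- different blocks
        have h1 := hkey x hx0 hx1
        have h2 := hkey y hy0 hy1
        rw [← hjx] at h1
        rw [← hjy] at h2
        have hmx : min (x - (jx:ℝ)*Δ) (((jx:ℝ)+1)*Δ - x) ≤ ((jx:ℝ)+1)*Δ - x :=
          min_le_right _ _
        have hmy : min (y - (jy:ℝ)*Δ) (((jy:ℝ)+1)*Δ - y) ≤ y - (jy:ℝ)*Δ :=
          min_le_left _ _
        have hstep : ((jx:ℝ)+1) * Δ ≤ (jy:ℝ) * Δ := by
          have : (jx:ℝ) + 1 ≤ (jy:ℝ) := by exact_mod_cast hlt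
          nlinarith
        calc |fq L Δ z x - fq L Δ z y|
            ≤ |fq L Δ z x - 1| + |fq L Δ z y - 1| := by
              rw [show fq L Δ z x - fq L Δ z y = (fq L Δ z x - 1) - (fq L Δ z y - 1) by ring]
              exact abs_sub _ _
          _ ≤ L * (((jx:ℝ)+1)*Δ - x) + L * (y - (jy:ℝ)*Δ) := by
              have := mul_le_mul_of_nonneg_left hmx hL.le
              have := mul_le_mul_of_nonneg_left hmy hL.le
              linarith
          _ ≤ L * |x - y| := by
              rw [abs_of_nonpos (by linarith), neg_sub]
              nlinarith
    intro x hx y hy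
    rcases le_total x y with h | h
    · exact main x hx y hy h
    · rw [abs_sub_comm, abs_sub_comm x y]
      exact main y hy x hx h
  · -- integral
    have hcont : ∀ k : ℕ, Continuous fun x : ℝ =>
        1 + fqsgn z k * L * min (x - (k : ℝ) * Δ) (((k : ℝ) + 1) * Δ - x) := by
      intro k; fun_prop
    have hintk : ∀ k : ℕ, IntervalIntegrable (fq L Δ z) volume ((k:ℝ) * Δ) (((k:ℝ)+1) * Δ) := by
      intro k
      have hle : (k:ℝ) * Δ ≤ ((k:ℝ)+1) * Δ := by nlinarith
      apply ((hcont k).intervalIntegrable _ _).congr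
      intro a ha
      rw [Set.uIoc_of_le hle] at ha
      exact (fq_on_block L Δ z hΔ k a ⟨ha.1.le, ha.2⟩).symm
    have hsum := intervalIntegral.sum_integral_adjacent_intervals
      (a := fun k : ℕ => (k : ℝ) * Δ) (μ := volume) (f := fq L Δ z) (n := M)
      (fun k _ => by exact_mod_cast hintk k)
    simp only [Nat.cast_zero, zero_mul] at hsum
    rw [hMΔ1] at hsum
    rw [← hsum]
    have hblock : ∀ k : ℕ, (∫ x in ((k:ℝ)*Δ)..(((k:ℝ)+1)*Δ), fq L Δ z x)
        = Δ + fqsgn z k * L * Δ ^ 2 / 4 := by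
      intro k
      have hle : (k:ℝ) * Δ ≤ ((k:ℝ)+1) * Δ := by nlinarith
      have h1 : (∫ x in ((k:ℝ)*Δ)..(((k:ℝ)+1)*Δ), fq L Δ z x)
          = ∫ x in ((k:ℝ)*Δ)..(((k:ℝ)+1)*Δ),
              (1 + fqsgn z k * L * min (x - (k:ℝ)*Δ) (((k:ℝ)+1)*Δ - x)) := by
        apply intervalIntegral.integral_congr
        intro a ha
        rw [Set.uIcc_of_le hle] at ha
        exact fq_on_block L Δ z hΔ k a ha
      rw [h1]
      have := integral_tent ((k:ℝ)*Δ) Δ (fqsgn z k * L) hΔ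
      rw [show (k:ℝ)*Δ + Δ = ((k:ℝ)+1)*Δ by ring] at this
      exact this
    have hconv : ∀ k ∈ Finset.range M,
        (∫ x in ((k:ℝ)*Δ)..(((k+1:ℕ):ℝ)*Δ), fq L Δ z x) = Δ + fqsgn z k * L * Δ ^ 2 / 4 := by
      intro k _
      push_cast
      exact hblock k
    rw [Finset.sum_congr rfl hconv, Finset.sum_add_distrib, Finset.sum_const,
      Finset.card_range]
    have hpair : ∑ k ∈ Finset.range M, fqsgn z k * L * Δ ^ 2 / 4 = 0 := by
      have hM2 : M = 2 * (M / 2) := by omega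
      rw [show (fun k => fqsgn z k * L * Δ ^ 2 / 4) = fun k => fqsgn z k * (L * Δ ^ 2 / 4)
        from funext fun k => by ring]
      rw [← Finset.sum_mul, hM2, sum_fqsgn]
      ring
    rw [hpair, add_zero, nsmul_eq_mul, hMΔ1]
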